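/- For any infinite set Ω and any natural number n ≥ 2, the set I_n of all elements of order exactly n in S(Ω) generates S(Ω). -/

import Mathlib

open Equiv Function

namespace OrderNGen

section Base
variable (n : ℕ) (hn : 2 ≤ n)

/-- the shift `(x, s) ↦ (x+1, s)` on `ZMod n × Bool`. -/
def U : Perm (ZMod n × Bool) := (Equiv.addRight (1 : ZMod n)).prodCongr (Equiv.refl Bool)

lemma U_apply (x : ZMod n) (s : Bool) : U n (x, s) = (x + 1, s) := rfl

lemma U_pow (m : ℕ) (x : ZMod n) (s : Bool) : (U n ^ m) (x, s) = (x + m, s) := by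
  induction m with
  | zero => simp
  | succ m ih =>
    rw [pow_succ']
    simp only [Perm.mul_apply, U_apply, ih]
    push_cast
    ring_nf

lemma orderOf_U : orderOf (U n) = n := by
  have h1 : U n ^ n = 1 := by
    ext ⟨x, s⟩ <;> simp [U_pow]
  refine Nat.dvd_antisymm (orderOf_dvd_of_pow_eq_one h1) ?_
  have h2 : (U n) ^ orderOf (U n) = 1 := pow_orderOf_eq_one _
  have := congrArg (fun (f : Perm (ZMod n × Bool)) => (f (0, false)).1) h2
  simpa [U_pow, ZMod.natCast_eq_zero_iff, -pow_orderOf_eq_one] using this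

/-- the involution `w` used to conjugate. -/
def Wfun : ZMod n × Bool → ZMod n × Bool := fun p => if p.1 = 0 then p else (-p.1, !p.2)

lemma Wfun_invol : Function.Involutive (Wfun n) := by
  intro ⟨x, s⟩
  by_cases h : x = 0 <;> simp [Wfun, h]

def W : Perm (ZMod n × Bool) := (Wfun_invol n).toPerm

lemma W_apply (x : ZMod n) (s : Bool) : W n (x, s) = if x = 0 then (x, s) else (-x, !s) := rfl

/-- the "double transposition" as a product of `U` and a conjugate of `U`. -/
def M : Perm (ZMod n × Bool) := U n * (W n * U n * (W n)⁻¹)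

lemma M_apply (hn : 2 ≤ n) (x : ZMod n) (s : Bool) :
    M n (x, s) = if x = 0 ∨ x = 1 then (x, !s) else (x, s) := by
  have hWW : (W n)⁻¹ = W n :=
    inv_eq_of_mul_eq_one_right (Equiv.ext fun p => Wfun_invol n p)
  haveI : Fact (1 < n) := ⟨by omega⟩
  have h1 : (1 : ZMod n) ≠ 0 := one_ne_zero
  rw [M, hWW]
  simp only [Perm.mul_apply]
  by_cases h0 : x = 0
  · subst h0
    have s1 : W n (0, s) = (0, s) := by rw [W_apply, if_pos rfl]
    have s2 : U n (0, s) = (1, s) := by rw [U_apply, zero_add]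
    have s3 : W n (1, s) = (-1, !s) := by rw [W_apply, if_neg h1]
    have s4 : U n (-1, !s) = (0, !s) := by rw [U_apply, neg_add_cancel]
    rw [s1, s2, s3, s4, if_pos (Or.inl rfl)]
  · by_cases h1' : x = 1
    · subst h1'
      have s1 : W n (1, s) = (-1, !s) := by rw [W_apply, if_neg h1]
      have s2 : U n (-1, !s) = (0, !s) := by rw [U_apply, neg_add_cancel]
      have s3 : W n (0, !s) = (0, !s) := by rw [W_apply, if_pos rfl]
      have s4 : U n (0, !s) = (1, !s) := by rw [U_apply, zero_add]
      rw [s1, s2, s3, s4, if_pos (Or.inr rfl)]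
    · have h3 : -x + 1 ≠ 0 := fun h => h1' (by linear_combination -h)
      have s1 : W n (x, s) = (-x, !s) := by rw [W_apply, if_neg h0]
      have s2 : U n (-x, !s) = (-x + 1, !s) := U_apply n _ _
      have s3 : W n (-x + 1, !s) = (x - 1, s) := by
        rw [W_apply, if_neg h3]
        simp only [Prod.mk.injEq, Bool.not_not]
        constructor
        · ring
        · trivial
      have s4 : U n (x - 1, s) = (x, s) := by
        rw [U_apply, sub_add_cancel]
      rw [s1, s2, s3, s4, if_neg (by tauto)]

end Base

lemma orderOf_conj' {G : Type*} [Group G] (a g : G) : orderOf (g * a * g⁻¹) = orderOf a := by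
  have := orderOf_injective (MulAut.conj g).toMonoidHom (MulAut.conj g).injective a
  simpa using this

section Lift

variable {α : Type*} (ι : Type*)

/-- Act on the second component of a product. -/
def liftHom : Perm α →* Perm (ι × α) where
  toFun π := Equiv.prodCongr (Equiv.refl ι) π
  map_one' := Equiv.ext fun p => rfl
  map_mul' f g := Equiv.ext fun p => rfl

lemma liftHom_apply (π : Perm α) (i : ι) (a : α) : liftHom ι π (i, a) = (i, π a) := rfl

lemma liftHom_injective [Nonempty ι] : Function.Injective (liftHom ι (α := α)) := by
  intro f g h
  ext a
  have := congrArg (fun F : Perm (ι × α) => (F (Classical.arbitrary ι, a)).2) h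
  simpa [liftHom_apply] using this

lemma orderOf_liftHom [Nonempty ι] (π : Perm α) : orderOf (liftHom ι π) = orderOf π :=
  orderOf_injective _ (liftHom_injective ι) π

end Lift

section PairInvol

universe u
variable {Ω : Type u} {ι : Type*}

/-- The permutation flipping the `Bool` coordinate. -/
def pairSwap (ι : Type*) : Perm (ι × Bool) := liftHom ι ⟨not, not, Bool.not_not, Bool.not_not⟩

lemma pairSwap_apply (i : ι) (s : Bool) : pairSwap ι (i, s) = (i, !s) := rfl

lemma pairSwap_sq : pairSwap ι * pairSwap ι = 1 :=
  Equiv.ext fun p => by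
    rcases p with ⟨i, s⟩
    simp [pairSwap_apply, Perm.mul_apply]

/-- The involution determined by an embedded family of pairs. -/
noncomputable def pairInvol (E : ι × Bool ↪ Ω) : Perm Ω :=
  (pairSwap ι).viaEmbedding E

lemma pairInvol_apply (E : ι × Bool ↪ Ω) (i : ι) (s : Bool) :
    pairInvol E (E (i, s)) = E (i, !s) := by
  have := Perm.viaEmbedding_apply (pairSwap ι) E (i, s)
  rwa [pairSwap_apply] at this

lemma pairInvol_apply_of_not_mem (E : ι × Bool ↪ Ω) (x : Ω) (hx : x ∉ Set.range E) :
    pairInvol E x = x :=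
  Perm.viaEmbedding_apply_of_notMem _ _ _ hx

lemma pairInvol_sq (E : ι × Bool ↪ Ω) : pairInvol E * pairInvol E = 1 := by
  show Perm.viaEmbeddingHom E (pairSwap ι) * Perm.viaEmbeddingHom E (pairSwap ι) = 1
  rw [← map_mul, pairSwap_sq, map_one]

lemma pairInvol_moves (E : ι × Bool ↪ Ω) (x : Ω) :
    pairInvol E x ≠ x ↔ x ∈ Set.range E := by
  constructor
  · intro h
    by_contra hx
    exact h (pairInvol_apply_of_not_mem E x hx)
  · rintro ⟨⟨i, s⟩, rfl⟩
    rw [pairInvol_apply]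
    intro h
    have := E.injective h
    simp at this

end PairInvol

section Struct

universe u
variable {Ω : Type u}

/-- Every involution is given by an embedded family of pairs. -/
lemma exists_pairStruct (σ : Perm Ω) (hσ : σ * σ = 1) :
    ∃ (P : Type u) (E : P × Bool ↪ Ω),
      (∀ p s, σ (E (p, s)) = E (p, !s)) ∧ (∀ x, x ∈ Set.range E ↔ σ x ≠ x) := by
  classical
  have hσ' : ∀ x, σ (σ x) = x := fun x => by
    have := Equiv.ext_iff.mp hσ x
    simpa using this
  set Sup := {x : Ω // σ x ≠ x} with hSup
  set r : Sup → Sup → Prop := fun a b => a.1 = b.1 ∨ σ a.1 = b.1 with hr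
  have requiv : Equivalence r := by
    constructor
    · intro a; exact Or.inl rfl
    · rintro a b (h | h)
      · exact Or.inl h.symm
      · exact Or.inr (by rw [← h, hσ'])
    · rintro a b c (h | h) (h' | h')
      · exact Or.inl (h.trans h')
      · exact Or.inr (by rw [h, h'])
      · exact Or.inr (h.trans h')
      · exact Or.inl (by rw [← h'] at *; rw [← h, hσ'])
  set P := Quot r with hP
  set e0 : P × Bool → Ω := fun q => if q.2 then σ q.1.out.1 else q.1.out.1 with he0
  have hmem : ∀ (p : P) (s : Bool), σ (e0 (p, s)) ≠ e0 (p, s) := by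
    intro p s
    cases s
    · exact p.out.2
    · show σ (σ p.out.1) ≠ σ p.out.1
      rw [hσ']
      exact fun h => p.out.2 h.symm
  have hback : ∀ (p : P) (s : Bool), Quot.mk r ⟨e0 (p, s), hmem p s⟩ = p := by
    intro p s
    have : r p.out ⟨e0 (p, s), hmem p s⟩ := by
      cases s
      · exact Or.inl rfl
      · exact Or.inr rfl
    conv_rhs => rw [← Quot.out_eq p]
    exact (Quot.sound this).symm
  have hinj : Function.Injective e0 := by
    rintro ⟨p, s⟩ ⟨q, t⟩ h
    have hpq : p = q := by
      rw [← hback p s, ← hback q t]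
      congr 1
      exact Subtype.ext h
    subst hpq
    cases s <;> cases t
    · rfl
    · exact absurd (show p.out.1 = σ p.out.1 from h) (fun hh => p.out.2 hh.symm)
    · exact absurd (show p.out.1 = σ p.out.1 from h.symm) (fun hh => p.out.2 hh.symm)
    · rfl
  have hequi : ∀ (p : P) (s : Bool), σ (e0 (p, s)) = e0 (p, !s) := by
    intro p s
    cases s
    · rfl
    · exact hσ' _
  refine ⟨P, ⟨e0, hinj⟩, hequi, fun x => ?_⟩
  constructor
  · rintro ⟨⟨p, s⟩, rfl⟩
    exact hmem p s
  · intro hx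
    have hrel : r (Quot.mk r ⟨x, hx⟩).out ⟨x, hx⟩ := by
      have h1 : Quot.mk r (Quot.mk r ⟨x, hx⟩).out = Quot.mk r ⟨x, hx⟩ := Quot.out_eq _
      have := Quot.eqvGen_exact h1
      exact (Equivalence.eqvGen_iff requiv).mp this
    rcases hrel with h | h
    · exact ⟨(Quot.mk r ⟨x, hx⟩, false), h⟩
    · exact ⟨(Quot.mk r ⟨x, hx⟩, true), h⟩

end Struct

section Gadget

universe u
open Cardinal
variable {Ω : Type u}

/-- Core lemma: an involution whose support is infinite and of cardinality at most that of
its fixed-point set is a product of two permutations of order exactly `n`. -/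
lemma invol_mem_closure_of_card (n : ℕ) (hn : 2 ≤ n) (σ : Perm Ω) (hσ : σ * σ = 1)
    (hinf : Infinite {x : Ω // σ x ≠ x})
    (hcard : #{x : Ω // σ x ≠ x} ≤ #{x : Ω // σ x = x}) :
    σ ∈ Subgroup.closure {f : Perm Ω | orderOf f = n} := by
  classical
  haveI : Fact (1 < n) := ⟨by omega⟩
  have h10 : (1 : ZMod n) ≠ 0 := one_ne_zero
  obtain ⟨P, E, hE, hrange⟩ := exists_pairStruct σ hσ
  -- the support is equivalent to `P × Bool`
  have hsurj : Function.Surjective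
      (fun q : P × Bool => (⟨E q, (hrange (E q)).mp ⟨q, rfl⟩⟩ : {x : Ω // σ x ≠ x})) := by
    rintro ⟨x, hx⟩
    obtain ⟨q, hq⟩ := (hrange x).mpr hx
    exact ⟨q, Subtype.ext hq⟩
  haveI : Infinite (P × Bool) := Infinite.of_surjective _ hsurj
  haveI hPinf : Infinite P := by
    by_contra h
    rw [not_infinite_iff_finite] at h
    exact not_finite (P × Bool)
  haveI : Nonempty P := inferInstance
  have hPa : ℵ₀ ≤ #P := Cardinal.infinite_iff.mp hPinf
  -- group the pairs two by two
  have hPP : #(P ⊕ P) = #P := by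
    simp only [Cardinal.mk_sum, Cardinal.lift_id]
    exact Cardinal.add_eq_self hPa
  obtain ⟨χsum⟩ := Cardinal.eq.mp hPP
  let χ : P × Bool ≃ P :=
    (Equiv.prodComm P Bool).trans ((Equiv.boolProdEquivSum P).trans χsum)
  -- an embedding providing the fresh points
  have hcP : #(P × ({z : ZMod n // z ≠ 0 ∧ z ≠ 1} × Bool)) ≤ #{x : Ω // σ x = x} := by
    have h1 : #(P × ({z : ZMod n // z ≠ 0 ∧ z ≠ 1} × Bool)) ≤ #P * ℵ₀ := by
      have e1 : (P × ({z : ZMod n // z ≠ 0 ∧ z ≠ 1} × Bool)) ≃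
          (P × ULift.{u} ({z : ZMod n // z ≠ 0 ∧ z ≠ 1} × Bool)) :=
        Equiv.prodCongr (Equiv.refl P) Equiv.ulift.symm
      rw [Cardinal.mk_congr e1, Cardinal.mk_prod]
      simp only [Cardinal.lift_id]
      exact mul_le_mul' le_rfl Cardinal.mk_le_aleph0
    have h2 : #P * ℵ₀ = #P := Cardinal.mul_aleph0_eq hPa
    have h3 : #P ≤ #(P × Bool) := Cardinal.mk_le_of_injective
      (f := fun p => (p, false)) (fun a b h => (Prod.mk.injEq _ _ _ _).mp h |>.1)
    have h4 : #(P × Bool) = #{x : Ω // σ x ≠ x} := by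
      refine Cardinal.mk_congr (Equiv.ofBijective _ ⟨?_, hsurj⟩)
      intro a b h
      exact E.injective (congrArg Subtype.val h)
    calc #(P × ({z : ZMod n // z ≠ 0 ∧ z ≠ 1} × Bool)) ≤ #P * ℵ₀ := h1
      _ = #P := h2
      _ ≤ #(P × Bool) := h3
      _ = #{x : Ω // σ x ≠ x} := h4
      _ ≤ #{x : Ω // σ x = x} := hcard
  obtain ⟨ψ⟩ := (Cardinal.le_def _ _).mp hcP
  -- the big embedding
  let F : P × (ZMod n × Bool) → Ω := fun q =>
    if h0 : q.2.1 = 0 then E (χ (q.1, false), q.2.2)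
    else if h1 : q.2.1 = 1 then E (χ (q.1, true), q.2.2)
    else (ψ (q.1, ⟨q.2.1, h0, h1⟩, q.2.2) : Ω)
  have hF0 : ∀ p s, F (p, 0, s) = E (χ (p, false), s) := by
    intro p s; simp only [F, dif_pos rfl]
  have hF1 : ∀ p s, F (p, 1, s) = E (χ (p, true), s) := by
    intro p s; simp only [F]
    rw [dif_neg h10]
    simp
  have hFelse : ∀ p (z : ZMod n) s (h0 : z ≠ 0) (h1 : z ≠ 1),
      F (p, z, s) = (ψ (p, ⟨z, h0, h1⟩, s) : Ω) := by
    intro p z s h0 h1; simp only [F]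
    rw [dif_neg h0, dif_neg h1]
  have hFsupp : ∀ p (z : ZMod n) s, (z = 0 ∨ z = 1) → σ (F (p, z, s)) ≠ F (p, z, s) := by
    rintro p z s (rfl | rfl)
    · rw [hF0]; exact (hrange _).mp ⟨_, rfl⟩
    · rw [hF1]; exact (hrange _).mp ⟨_, rfl⟩
  have hFfix : ∀ p (z : ZMod n) s, ¬(z = 0 ∨ z = 1) → σ (F (p, z, s)) = F (p, z, s) := by
    intro p z s h
    push_neg at h
    rw [hFelse p z s h.1 h.2]
    exact (ψ _).2
  have hFinj : Function.Injective F := by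
    rintro ⟨p, z, s⟩ ⟨p', z', s'⟩ h
    by_cases hz : z = 0 ∨ z = 1 <;> by_cases hz' : z' = 0 ∨ z' = 1
    · -- both in the E part
      have hEform : ∀ (pp : P) (zz : ZMod n) (ss : Bool) (hh : zz = 0 ∨ zz = 1),
          F (pp, zz, ss) = E (χ (pp, zz = 1), ss) := by
        rintro pp zz ss (rfl | rfl)
        · rw [hF0]; congr 2; simp [Ne.symm h10]
        · rw [hF1]; congr 2; simp
      rw [hEform p z s hz, hEform p' z' s' hz'] at h
      have h2 := E.injective h
      have h3 : (p, decide (z = 1)) = (p', decide (z' = 1)) :=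
        χ.injective (congrArg Prod.fst h2)
      have hp : p = p' := congrArg Prod.fst h3
      have hs : s = s' := congrArg Prod.snd h2
      have hzz : z = z' := by
        have hd := congrArg Prod.snd h3
        simp only at hd
        rcases hz with rfl | rfl <;> rcases hz' with rfl | rfl <;> simp_all
      rw [hp, hs, hzz]
    · exact absurd ((hFfix p' z' s' hz') ▸ h ▸ hFsupp p z s hz) (by simp [h])
    · exact absurd ((hFfix p z s hz) ▸ h ▸ hFsupp p' z' s' hz') (by simp [h])
    · push_neg at hz hz'
      rw [hFelse p z s hz.1 hz.2, hFelse p' z' s' hz'.1 hz'.2] at h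
      have h2 := ψ.injective (Subtype.ext h)
      have hp : p = p' := congrArg Prod.fst h2
      have h3 := congrArg Prod.snd h2
      have hzz : z = z' := congrArg (fun w => (w.1 : ZMod n)) h3
      have hs : s = s' := congrArg Prod.snd h3
      rw [hp, hs, hzz]
  let Femb : P × (ZMod n × Bool) ↪ Ω := ⟨F, hFinj⟩
  -- the two order-n permutations
  let A : Perm Ω := (liftHom P (U n)).viaEmbedding Femb
  let B : Perm Ω := (liftHom P (W n * U n * (W n)⁻¹)).viaEmbedding Femb
  have hA : orderOf A = n := by
    rw [show A = Perm.viaEmbeddingHom Femb (liftHom P (U n)) from rfl,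
      orderOf_injective _ (Perm.viaEmbeddingHom_injective Femb),
      orderOf_liftHom, orderOf_U]
  have hB : orderOf B = n := by
    rw [show B = Perm.viaEmbeddingHom Femb (liftHom P (W n * U n * (W n)⁻¹)) from rfl,
      orderOf_injective _ (Perm.viaEmbeddingHom_injective Femb),
      orderOf_liftHom, orderOf_conj', orderOf_U]
  have hAB : σ = A * B := by
    have hABform : A * B = (liftHom P (M n)).viaEmbedding Femb := by
      show Perm.viaEmbeddingHom Femb (liftHom P (U n)) *
        Perm.viaEmbeddingHom Femb (liftHom P (W n * U n * (W n)⁻¹)) = _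
      rw [← map_mul, ← map_mul]
      rfl
    ext x
    rw [hABform]
    by_cases hx : x ∈ Set.range Femb
    · obtain ⟨⟨p, z, s⟩, rfl⟩ := hx
      have := Perm.viaEmbedding_apply (liftHom P (M n)) Femb (p, z, s)
      rw [show Femb (p, z, s) = F (p, z, s) from rfl] at this ⊢
      rw [this, liftHom_apply, M_apply n hn]
      by_cases hz : z = 0 ∨ z = 1
      · rw [if_pos hz]
        rcases hz with rfl | rfl
        · rw [show Femb ((p, 0, !s)) = F (p, 0, !s) from rfl, hF0, hF0, hE]
        · rw [show Femb ((p, 1, !s)) = F (p, 1, !s) from rfl, hF1, hF1, hE]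
      · rw [if_neg hz]
        exact hFfix p z s hz
    · rw [Perm.viaEmbedding_apply_of_notMem _ _ _ hx]
      -- x is not in the range of E either
      have hxE : x ∉ Set.range E := by
        rintro ⟨⟨pp, ss⟩, rfl⟩
        apply hx
        have hb : χ (χ.symm pp) = pp := χ.apply_symm_apply pp
        rcases hbb : χ.symm pp with ⟨p, b⟩
        rw [hbb] at hb
        cases b
        · exact ⟨(p, 0, ss), by rw [show Femb ((p, 0, ss)) = F (p, 0, ss) from rfl, hF0, hb]⟩
        · exact ⟨(p, 1, ss), by rw [show Femb ((p, 1, ss)) = F (p, 1, ss) from rfl, hF1, hb]⟩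
      by_contra hne
      exact hxE ((hrange x).mpr hne)
  rw [hAB]
  exact mul_mem (Subgroup.subset_closure hA) (Subgroup.subset_closure hB)

lemma mk_prodBool (α : Type u) : #(α × Bool) = #α + #α := by
  rw [Cardinal.mk_congr ((Equiv.prodComm α Bool).trans (Equiv.boolProdEquivSum α))]
  simp [Cardinal.mk_sum, Cardinal.lift_id]

/-- An involution with small support lies in the closure. -/
lemma invol_mem_closure_of_le (n : ℕ) (hn : 2 ≤ n) [Infinite Ω] (σ : Perm Ω)
    (hσ : σ * σ = 1) (hcard : #{x : Ω // σ x ≠ x} ≤ #{x : Ω // σ x = x}) :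
    σ ∈ Subgroup.closure {f : Perm Ω | orderOf f = n} := by
  classical
  have hσ' : ∀ x, σ (σ x) = x := fun x => by
    have := Equiv.ext_iff.mp hσ x
    simpa using this
  haveI hFxInf : Infinite {x : Ω // σ x = x} := by
    by_contra h
    rw [not_infinite_iff_finite] at h
    haveI := h
    haveI : Finite {x : Ω // σ x ≠ x} := by
      rw [← Cardinal.lt_aleph0_iff_finite] at h ⊢
      exact lt_of_le_of_lt hcard h
    haveI : Finite Ω :=
      Finite.of_equiv _ (Equiv.sumCompl (fun x : Ω => σ x = x))
    exact not_finite Ω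
  set Fx := {x : Ω // σ x = x} with hFx
  have hFa : ℵ₀ ≤ #Fx := Cardinal.infinite_iff.mp hFxInf
  have hFsum : #((Fx ⊕ Fx) ⊕ Fx) = #Fx := by
    simp only [Cardinal.mk_sum, Cardinal.lift_id]
    rw [Cardinal.add_eq_self hFa, Cardinal.add_eq_self hFa]
  obtain ⟨δ⟩ := Cardinal.eq.mp hFsum
  -- the padding involution `c`
  let Ecf : Fx × Bool → Ω := fun q => (δ (Sum.inl (cond q.2 (Sum.inl q.1) (Sum.inr q.1))) : Ω)
  have hEcinj : Function.Injective Ecf := by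
    rintro ⟨f, s⟩ ⟨f', s'⟩ h
    have h2 := δ.injective (Subtype.ext h)
    have h3 := Sum.inl_injective h2
    cases s <;> cases s' <;> simp_all [Sum.inl_injective.eq_iff, Sum.inr_injective.eq_iff]
  let Ec : Fx × Bool ↪ Ω := ⟨Ecf, hEcinj⟩
  have hEcFix : ∀ q, σ (Ec q) = Ec q := fun q => (δ _).2
  have hResNotMem : ∀ f : Fx, ((δ (Sum.inr f)) : Ω) ∉ Set.range Ec := by
    rintro f ⟨⟨f', s'⟩, hq⟩
    have := δ.injective (Subtype.ext hq)
    cases s' <;> simp_all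
  let c : Perm Ω := pairInvol Ec
  have hc2 : c * c = 1 := pairInvol_sq Ec
  have hcfix : ∀ x, x ∉ Set.range Ec → c x = x := fun x h => pairInvol_apply_of_not_mem Ec x h
  -- `σ` and `c` commute
  have hcomm : ∀ x, σ (c x) = c (σ x) := by
    intro x
    by_cases hx : x ∈ Set.range Ec
    · obtain ⟨⟨f, s⟩, rfl⟩ := hx
      rw [pairInvol_apply, hEcFix ⟨f, s⟩, hEcFix ⟨f, !s⟩, pairInvol_apply]
    · rw [hcfix x hx]
      by_cases hfix : σ x = x
      · rw [hfix, hcfix x hx]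
      · have hsx : σ x ∉ Set.range Ec := by
          intro hmem
          apply hfix
          have h1 : σ (σ x) = σ x := by
            obtain ⟨q, hq⟩ := hmem
            rw [← hq]
            exact hEcFix q
          rw [hσ' x] at h1
          exact h1.symm
        rw [hcfix _ hsx]
  have hccomm : c * σ = σ * c := Equiv.ext fun x => (hcomm x).symm
  obtain ⟨σ₁, hσ₁def⟩ : ∃ t : Perm Ω, t = σ * c := ⟨_, rfl⟩
  have hσ₁ : σ₁ * σ₁ = 1 := by
    rw [hσ₁def, (show Commute c σ from hccomm).mul_mul_mul_comm σ c, hσ, hc2, one_mul]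
  have hsupp₁ : ∀ x, σ₁ x ≠ x ↔ (σ x ≠ x ∨ x ∈ Set.range Ec) := by
    intro x
    rw [hσ₁def]
    show σ (c x) ≠ x ↔ _
    by_cases hx : x ∈ Set.range Ec
    · simp only [hx, or_true, iff_true]
      obtain ⟨⟨f, s⟩, rfl⟩ := hx
      rw [pairInvol_apply, hEcFix ⟨f, !s⟩]
      intro h
      have := Ec.injective h
      simp at this
    · rw [hcfix x hx]
      simp [hx]
  haveI hs₁inf : Infinite {x : Ω // σ₁ x ≠ x} := by
    refine Infinite.of_injective
      (fun f : Fx => (⟨Ec (f, false), (hsupp₁ _).mpr (Or.inr ⟨(f, false), rfl⟩)⟩ :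
        {x : Ω // σ₁ x ≠ x})) ?_
    intro a b h
    simp only [Subtype.mk.injEq] at h
    have := Ec.injective h
    simpa using this
  have hm1 : #{x : Ω // σ₁ x ≠ x} ≤ #Fx := by
    have e1 : {x : Ω // σ₁ x ≠ x} ≃ ({x | σ x ≠ x} ∪ Set.range Ec : Set Ω) :=
      Equiv.subtypeEquivRight hsupp₁
    calc #{x : Ω // σ₁ x ≠ x} = #({x | σ x ≠ x} ∪ Set.range Ec : Set Ω) := Cardinal.mk_congr e1
      _ ≤ #{x : Ω | σ x ≠ x} + #(Set.range Ec) := Cardinal.mk_union_le _ _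
      _ ≤ #Fx + #(Fx × Bool) := add_le_add hcard Cardinal.mk_range_le
      _ = #Fx + (#Fx + #Fx) := by rw [mk_prodBool]
      _ = #Fx := by rw [Cardinal.add_eq_self hFa, Cardinal.add_eq_self hFa]
  have hm2 : #Fx ≤ #{x : Ω // σ₁ x = x} := by
    have hfixres : ∀ f : Fx, σ₁ ((δ (Sum.inr f) : Ω)) = (δ (Sum.inr f) : Ω) := by
      intro f
      rw [hσ₁def, Perm.mul_apply, hcfix _ (hResNotMem f)]
      exact (δ _).2
    refine Cardinal.mk_le_of_injective
      (f := fun f : Fx => (⟨(δ (Sum.inr f) : Ω), hfixres f⟩ : {x : Ω // σ₁ x = x})) ?_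
    intro a b h
    simp only [Subtype.mk.injEq] at h
    have h2 := δ.injective (Subtype.ext h)
    exact Sum.inr_injective h2
  have hσ₁mem : σ₁ ∈ Subgroup.closure {f : Perm Ω | orderOf f = n} :=
    invol_mem_closure_of_card n hn σ₁ hσ₁ hs₁inf (le_trans hm1 hm2)
  -- `c` itself is in the closure
  haveI hcinf : Infinite {x : Ω // c x ≠ x} := by
    refine Infinite.of_injective
      (fun f : Fx => (⟨Ec (f, false), (pairInvol_moves Ec _).mpr ⟨(f, false), rfl⟩⟩ :
        {x : Ω // c x ≠ x})) ?_
    intro a b h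
    simp only [Subtype.mk.injEq] at h
    have := Ec.injective h
    simpa using this
  have hcm1 : #{x : Ω // c x ≠ x} ≤ #Fx := by
    have e1 : {x : Ω // c x ≠ x} ≃ (Set.range Ec : Set Ω) :=
      Equiv.subtypeEquivRight (pairInvol_moves Ec)
    calc #{x : Ω // c x ≠ x} = #(Set.range Ec : Set Ω) := Cardinal.mk_congr e1
      _ ≤ #(Fx × Bool) := Cardinal.mk_range_le
      _ = #Fx + #Fx := mk_prodBool _
      _ = #Fx := Cardinal.add_eq_self hFa
  have hcm2 : #Fx ≤ #{x : Ω // c x = x} := by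
    refine Cardinal.mk_le_of_injective
      (f := fun f : Fx => (⟨(δ (Sum.inr f) : Ω), hcfix _ (hResNotMem f)⟩ :
        {x : Ω // c x = x})) ?_
    intro a b h
    simp only [Subtype.mk.injEq] at h
    have h2 := δ.injective (Subtype.ext h)
    exact Sum.inr_injective h2
  have hcmem : c ∈ Subgroup.closure {f : Perm Ω | orderOf f = n} :=
    invol_mem_closure_of_card n hn c hc2 hcinf (le_trans hcm1 hcm2)
  have hfinal : σ = σ₁ * c := by
    rw [hσ₁def, mul_assoc, hc2, mul_one]
  rw [hfinal]
  exact mul_mem hσ₁mem hcmem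

/-- Every involution lies in the closure of the elements of order `n`. -/
lemma invol_mem_closure (n : ℕ) (hn : 2 ≤ n) [Infinite Ω] (σ : Perm Ω) (hσ : σ * σ = 1) :
    σ ∈ Subgroup.closure {f : Perm Ω | orderOf f = n} := by
  classical
  rcases le_or_gt #{x : Ω // σ x ≠ x} #{x : Ω // σ x = x} with hle | hlt
  · exact invol_mem_closure_of_le n hn σ hσ hle
  · obtain ⟨P, E, hE, hrange⟩ := exists_pairStruct σ hσ
    haveI hsuppInf : Infinite {x : Ω // σ x ≠ x} := by
      by_contra hfin
      rw [not_infinite_iff_finite] at hfin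
      haveI := hfin
      haveI : Infinite {x : Ω // σ x = x} := by
        by_contra hfin2
        rw [not_infinite_iff_finite] at hfin2
        haveI := hfin2
        haveI : Finite Ω := Finite.of_equiv _ (Equiv.sumCompl (fun x : Ω => σ x = x))
        exact not_finite Ω
      exact absurd hlt (not_lt.mpr (le_trans
        (le_of_lt (Cardinal.lt_aleph0_iff_finite.mpr hfin))
        (Cardinal.infinite_iff.mp ‹Infinite {x : Ω // σ x = x}›)))
    have hsurj : Function.Surjective
        (fun q : P × Bool => (⟨E q, (hrange (E q)).mp ⟨q, rfl⟩⟩ : {x : Ω // σ x ≠ x})) := by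
      rintro ⟨x, hx⟩
      obtain ⟨q, hq⟩ := (hrange x).mpr hx
      exact ⟨q, Subtype.ext hq⟩
    haveI : Infinite (P × Bool) := Infinite.of_surjective _ hsurj
    haveI hPinf : Infinite P := by
      by_contra hfin
      rw [not_infinite_iff_finite] at hfin
      haveI := hfin
      exact not_finite (P × Bool)
    have hPa : ℵ₀ ≤ #P := Cardinal.infinite_iff.mp hPinf
    have hPP : #(P ⊕ P) = #P := by
      simp only [Cardinal.mk_sum, Cardinal.lift_id]
      exact Cardinal.add_eq_self hPa
    obtain ⟨ε⟩ := Cardinal.eq.mp hPP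
    have hinj1 : Function.Injective (fun q : P × Bool => E (ε (Sum.inl q.1), q.2)) := by
      rintro ⟨p, s⟩ ⟨p', s'⟩ hh
      have h2 := E.injective hh
      have h3 := ε.injective (congrArg Prod.fst h2)
      have h4 := congrArg Prod.snd h2
      simp only [Sum.inl.injEq] at h3
      simp only at h4
      rw [Prod.mk.injEq]
      exact ⟨h3, h4⟩
    have hinj2 : Function.Injective (fun q : P × Bool => E (ε (Sum.inr q.1), q.2)) := by
      rintro ⟨p, s⟩ ⟨p', s'⟩ hh
      have h2 := E.injective hh
      have h3 := ε.injective (congrArg Prod.fst h2)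
      have h4 := congrArg Prod.snd h2
      simp only [Sum.inr.injEq] at h3
      simp only at h4
      rw [Prod.mk.injEq]
      exact ⟨h3, h4⟩
    let E₁ : P × Bool ↪ Ω := ⟨_, hinj1⟩
    let E₂ : P × Bool ↪ Ω := ⟨_, hinj2⟩
    have hdisj12 : ∀ q : P × Bool, E₁ q ∉ Set.range E₂ := by
      rintro ⟨p, s⟩ ⟨⟨p', s'⟩, hh⟩
      have h2 := E.injective hh
      have h3 := ε.injective (congrArg Prod.fst h2)
      simp at h3
    have hdisj21 : ∀ q : P × Bool, E₂ q ∉ Set.range E₁ := by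
      rintro ⟨p, s⟩ ⟨⟨p', s'⟩, hh⟩
      have h2 := E.injective hh
      have h3 := ε.injective (congrArg Prod.fst h2)
      simp at h3
    obtain ⟨σ₁, hd1⟩ : ∃ t : Perm Ω, t = pairInvol E₁ := ⟨_, rfl⟩
    obtain ⟨σ₂, hd2⟩ : ∃ t : Perm Ω, t = pairInvol E₂ := ⟨_, rfl⟩
    have hdecomp : σ = σ₁ * σ₂ := by
      ext x
      rw [Perm.mul_apply, hd1, hd2]
      by_cases hx : x ∈ Set.range E
      · obtain ⟨⟨q, s⟩, rfl⟩ := hx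
        rcases hq : ε.symm q with p | p
        · have hq' : ε (Sum.inl p) = q := by rw [← hq, ε.apply_symm_apply]
          have hform : E (q, s) = E₁ (p, s) := by
            show E (q, s) = E (ε (Sum.inl p), s)
            rw [hq']
          have hx2 : E (q, s) ∉ Set.range E₂ := hform ▸ hdisj12 (p, s)
          rw [pairInvol_apply_of_not_mem E₂ _ hx2, hform, pairInvol_apply]
          show σ (E (ε (Sum.inl p), s)) = E (ε (Sum.inl p), !s)
          exact hE _ _
        · have hq' : ε (Sum.inr p) = q := by rw [← hq, ε.apply_symm_apply]
          have hform : E (q, s) = E₂ (p, s) := by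
            show E (q, s) = E (ε (Sum.inr p), s)
            rw [hq']
          rw [hform, pairInvol_apply]
          have hx1 : E₂ (p, !s) ∉ Set.range E₁ := hdisj21 (p, !s)
          rw [pairInvol_apply_of_not_mem E₁ _ hx1]
          show σ (E (ε (Sum.inr p), s)) = E (ε (Sum.inr p), !s)
          exact hE _ _
      · have hfix : σ x = x := by
          by_contra hne
          exact hx ((hrange x).mpr hne)
        have hx1 : x ∉ Set.range E₁ := by
          rintro ⟨⟨p, s⟩, rfl⟩
          exact hx ⟨(ε (Sum.inl p), s), rfl⟩
        have hx2 : x ∉ Set.range E₂ := by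
          rintro ⟨⟨p, s⟩, rfl⟩
          exact hx ⟨(ε (Sum.inr p), s), rfl⟩
        rw [pairInvol_apply_of_not_mem E₂ _ hx2, pairInvol_apply_of_not_mem E₁ _ hx1, hfix]
    have hmem : ∀ (G : P × Bool ↪ Ω), (∀ q : P × Bool, G q ∉ Set.range E → False) →
        True := fun _ _ => trivial
    -- each factor is in the closure
    have key : ∀ (A B : P × Bool ↪ Ω), (∀ q : P × Bool, A q ∉ Set.range B) →
        pairInvol A ∈ Subgroup.closure {f : Perm Ω | orderOf f = n} := by
      intro A B hAB
      refine invol_mem_closure_of_card n hn _ (pairInvol_sq A) ?_ ?_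
      · refine Infinite.of_injective
          (fun p : P => (⟨A (p, false), (pairInvol_moves A _).mpr ⟨(p, false), rfl⟩⟩ :
            {x : Ω // pairInvol A x ≠ x})) ?_
        intro a b h
        simp only [Subtype.mk.injEq] at h
        have := A.injective h
        simpa using this
      · have h1 : #{x : Ω // pairInvol A x ≠ x} ≤ #(P × Bool) := by
          have e1 : {x : Ω // pairInvol A x ≠ x} ≃ (Set.range A : Set Ω) :=
            Equiv.subtypeEquivRight (pairInvol_moves A)
          calc #{x : Ω // pairInvol A x ≠ x} = #(Set.range A : Set Ω) := Cardinal.mk_congr e1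
            _ ≤ #(P × Bool) := Cardinal.mk_range_le
        have h2 : #(P × Bool) ≤ #{x : Ω // pairInvol A x = x} := by
          refine Cardinal.mk_le_of_injective (f := fun q : P × Bool =>
            (⟨B q, pairInvol_apply_of_not_mem A _ (fun hmem => ?_)⟩ :
              {x : Ω // pairInvol A x = x})) ?_
          · obtain ⟨q', hq'⟩ := hmem
            exact hAB q' (hq' ▸ ⟨q, rfl⟩)
          · intro a b h
            simp only [Subtype.mk.injEq] at h
            exact B.injective h
        exact le_trans h1 h2
    rw [hdecomp]
    exact mul_mem (hd1 ▸ key E₁ E₂ hdisj12) (hd2 ▸ key E₂ E₁ hdisj21)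

end Gadget

section TwoInvol

universe u
variable {Ω : Type u}

/-- Every permutation is a product of two involutions. -/
lemma exists_invol_factorization (g : Perm Ω) :
    ∃ σ τ : Perm Ω, σ * σ = 1 ∧ τ * τ = 1 ∧ g = σ * τ := by
  classical
  set r' : Ω → Ω → Prop := fun x y => ∃ k : ℤ, (g ^ k) x = y with hr'
  have requiv : Equivalence r' := by
    constructor
    · exact fun x => ⟨0, rfl⟩
    · rintro x y ⟨k, hk⟩
      refine ⟨-k, ?_⟩
      have h1 : g ^ (-k) * g ^ k = 1 := by rw [← zpow_add, neg_add_cancel, zpow_zero]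
      rw [← hk, ← Perm.mul_apply, h1, Perm.one_apply]
    · rintro x y z ⟨k, hk⟩ ⟨l, hl⟩
      refine ⟨l + k, ?_⟩
      rw [zpow_add, Perm.mul_apply, hk, hl]
  have cancel : ∀ (a b : ℤ) (y : Ω), (g ^ a) y = (g ^ b) y → (g ^ (-a)) y = (g ^ (-b)) y := by
    intro a b y hab
    have h0 := congrArg (⇑(g ^ (-a + -b))) hab
    rw [← Perm.mul_apply, ← Perm.mul_apply, ← zpow_add, ← zpow_add] at h0
    have e1 : -a + -b + a = -b := by ring
    have e2 : -a + -b + b = -a := by ring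
    rw [e1, e2] at h0
    exact h0.symm
  set rep : Ω → Ω := fun x => (Quot.mk r' x).out with hrepdef
  have hrep : ∀ x, r' (rep x) x := fun x =>
    (Equivalence.eqvGen_iff requiv).mp (Quot.eqvGen_exact (Quot.out_eq (Quot.mk r' x)))
  have hrepeq : ∀ x y, r' x y → rep x = rep y := fun x y h =>
    congrArg Quot.out (Quot.sound h)
  set k : Ω → ℤ := fun x => (hrep x).choose with hkdef
  have hk : ∀ x, (g ^ k x) (rep x) = x := fun x => (hrep x).choose_spec
  set sfun : Ω → Ω := fun x => (g ^ (-(k x))) (rep x) with hsdef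
  have hrel : ∀ x, r' x (sfun x) := fun x =>
    requiv.trans (requiv.symm (hrep x)) ⟨-(k x), rfl⟩
  have hsrep : ∀ x, rep (sfun x) = rep x := fun x =>
    hrepeq _ _ (requiv.symm (hrel x))
  have hsinv : Function.Involutive sfun := by
    intro x
    have h1 : (g ^ (k (sfun x))) (rep x) = (g ^ (-(k x))) (rep x) := by
      have := hk (sfun x)
      rw [hsrep x] at this
      exact this
    have h3 := cancel _ _ _ h1
    show (g ^ (-(k (sfun x)))) (rep (sfun x)) = x
    rw [hsrep x, h3, neg_neg]
    exact hk x
  have hconj : ∀ x, sfun (g x) = g⁻¹ (sfun x) := by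
    intro x
    have hgx : r' x (g x) := ⟨1, by simp⟩
    have hrgx : rep (g x) = rep x := hrepeq _ _ (requiv.symm hgx)
    have h1 : (g ^ (k (g x))) (rep x) = (g ^ (1 + k x)) (rep x) := by
      have ha := hk (g x)
      rw [hrgx] at ha
      rw [ha, zpow_add, Perm.mul_apply, hk x, zpow_one]
    have h2 := cancel _ _ _ h1
    show (g ^ (-(k (g x)))) (rep (g x)) = g⁻¹ (sfun x)
    rw [hrgx, h2]
    have h4 : g ^ (-(1 + k x)) = g⁻¹ * g ^ (-(k x)) := by
      rw [neg_add, zpow_add, zpow_neg_one]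
    rw [h4, Perm.mul_apply]
  set σ : Perm Ω := hsinv.toPerm with hσdef
  have hσapp : ∀ x, σ x = sfun x := fun x => rfl
  have hσ2 : σ * σ = 1 := Equiv.ext fun x => hsinv x
  refine ⟨σ, σ * g, hσ2, ?_, ?_⟩
  · show (σ * g) * (σ * g) = 1
    ext x
    show σ (g (σ (g x))) = x
    rw [hσapp, hσapp, hconj (sfun (g x)), hsinv (g x)]
    exact g.symm_apply_apply _
  · rw [← mul_assoc, hσ2, one_mul]

end TwoInvol
end OrderNGen

theorem orderN_generates {Ω : Type*} [Infinite Ω] (n : ℕ) (hn : 2 ≤ n) :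
    Subgroup.closure {f : Equiv.Perm Ω | orderOf f = n} = ⊤ := by
  rw [eq_top_iff]
  intro g _
  obtain ⟨σ, τ, hσ, hτ, hg⟩ := OrderNGen.exists_invol_factorization g
  rw [hg]
  exact mul_mem (OrderNGen.invol_mem_closure n hn σ hσ) (OrderNGen.invol_mem_closure n hn τ hτ)
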